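/- In the Drasin–Sastry parameter construction, for every ε ∈ (0,1) and every n ≥ n₀ with r_n ≤ ε r_{n+1} one has L(ε r_{n+1}) ≤ ε^n · L(r_{n+1}) = ε^n · r_{n+2}. -/

import Mathlib

open Filter

/-- In the Drasin–Sastry parameter construction, for every `ε ∈ (0,1)` and every `n ≥ n₀` with `r_n ≤ ε r_{n+1}` one has `L (ε r_{n+1}) ≤ ε^n · L (r_{n+1}) = ε^n · r_{n+2}`. -/
theorem drasinSastry_L_eps_upper (n₀ : ℕ) (hn₀ : 2 ≤ n₀) (R' : ℝ) (hR' : 4 < R')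
    (ν : ℝ → ℝ) (r : ℕ → ℝ)
    (hν₀ : ∀ t : ℝ, 0 ≤ t → t ≤ R' → ν t = n₀)
    (hrn₀ : r n₀ = R')
    (hrec : ∀ n : ℕ, n₀ ≤ n → r (n + 1) = Real.exp (∫ t in (1 : ℝ)..(r n), ν t / t))
    (hνlin : ∀ n : ℕ, n₀ ≤ n → ∀ t : ℝ, r n ≤ t → t ≤ r (n + 1) →
      ν t = (t - r n) / (r (n + 1) - r n) + n)
    (L : ℝ → ℝ) (hL : ∀ s : ℝ, L s = Real.exp (∫ t in (1 : ℝ)..s, ν t / t)) :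
    ∀ ε : ℝ, 0 < ε → ε < 1 → ∀ n : ℕ, n₀ ≤ n → r n ≤ ε * r (n + 1) →
      L (ε * r (n + 1)) ≤ ε ^ n * L (r (n + 1)) ∧ L (r (n + 1)) = r (n + 2) := by
  -- integrability of ν / t on [1, s] from monotonicity of ν on [0, s]
  have hint : ∀ s : ℝ, 1 ≤ s → MonotoneOn ν (Set.Icc 0 s) →
      IntervalIntegrable (fun t => ν t / t) MeasureTheory.volume 1 s := by
    intro s hs hmono
    have h1 : IntervalIntegrable ν MeasureTheory.volume 1 s := by
      apply MonotoneOn.intervalIntegrable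
      apply hmono.mono
      rw [Set.uIcc_of_le hs]
      exact Set.Icc_subset_Icc (by norm_num) le_rfl
    have h2 : ContinuousOn (fun t : ℝ => t⁻¹) (Set.uIcc 1 s) := by
      apply ContinuousOn.inv₀ continuousOn_id
      intro x hx
      rw [Set.uIcc_of_le hs] at hx
      exact ne_of_gt (lt_of_lt_of_le one_pos hx.1)
    have := h1.mul_continuousOn h2
    simpa [div_eq_mul_inv] using this
  -- computing the constant integral
  have hconst : ∀ (a b c : ℝ), 1 ≤ a → a ≤ b → 0 ≤ c →
      (∫ t in a..b, c / t) = c * Real.log (b / a) := by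
    intro a b c ha hab hc
    have h0 : (0:ℝ) ∉ Set.uIcc a b := by
      rw [Set.uIcc_of_le hab]
      intro h
      exact absurd h.1 (by linarith)
    calc (∫ t in a..b, c / t) = ∫ t in a..b, c * (1 / t) := by
          simp [div_eq_mul_inv]
      _ = c * ∫ t in a..b, 1 / t := intervalIntegral.integral_const_mul c _
      _ = c * Real.log (b / a) := by rw [integral_one_div h0]
  -- continuity integrability of constant / t
  have hintc : ∀ (a b c : ℝ), 1 ≤ a → a ≤ b →
      IntervalIntegrable (fun t => c / t) MeasureTheory.volume a b := by
    intro a b c ha hab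
    apply ContinuousOn.intervalIntegrable
    apply ContinuousOn.div continuousOn_const continuousOn_id
    intro x hx
    rw [Set.uIcc_of_le hab] at hx
    exact ne_of_gt (lt_of_lt_of_le (lt_of_lt_of_le one_pos ha) hx.1)
  -- the step lemma: under the inductive facts, r n < r (n+1)
  have hstep : ∀ n : ℕ, n₀ ≤ n → R' ≤ r n → MonotoneOn ν (Set.Icc 0 (r n)) →
      (∀ t ∈ Set.Icc (0:ℝ) (r n), (n₀:ℝ) ≤ ν t) → r n < r (n + 1) := by
    intro n hn hRr hmono hlb
    have h1 : (1:ℝ) < r n := by linarith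
    have hI : IntervalIntegrable (fun t => ν t / t) MeasureTheory.volume 1 (r n) :=
      hint (r n) h1.le hmono
    have hcomp : (∫ t in (1:ℝ)..(r n), (n₀:ℝ) / t) ≤ ∫ t in (1:ℝ)..(r n), ν t / t := by
      apply intervalIntegral.integral_mono_on h1.le (hintc 1 (r n) n₀ le_rfl h1.le) hI
      intro x hx
      have hx0 : (0:ℝ) < x := lt_of_lt_of_le one_pos hx.1
      have hb := hlb x ⟨hx0.le, hx.2⟩
      exact div_le_div_of_nonneg_right hb hx0.le
    have hlog : (∫ t in (1:ℝ)..(r n), (n₀:ℝ) / t) = n₀ * Real.log (r n) := by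
      rw [hconst 1 (r n) n₀ le_rfl h1.le (by positivity)]
      simp
    have hpow : Real.exp ((n₀:ℝ) * Real.log (r n)) = (r n) ^ n₀ := by
      rw [Real.exp_nat_mul, Real.exp_log (by linarith)]
    have h2 : r n < (r n) ^ n₀ := by
      calc r n < (r n) ^ 2 := by nlinarith
        _ ≤ (r n) ^ n₀ := pow_le_pow_right₀ (by linarith) hn₀
    calc r n < (r n) ^ n₀ := h2
      _ = Real.exp ((n₀:ℝ) * Real.log (r n)) := hpow.symm
      _ ≤ Real.exp (∫ t in (1:ℝ)..(r n), ν t / t) := by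
          apply Real.exp_le_exp.2
          rw [← hlog]; exact hcomp
      _ = r (n + 1) := (hrec n hn).symm
  -- main induction: basic facts about ν on [0, r n]
  have key : ∀ n : ℕ, n₀ ≤ n → R' ≤ r n ∧ MonotoneOn ν (Set.Icc 0 (r n)) ∧
      ∀ t ∈ Set.Icc (0:ℝ) (r n), (n₀:ℝ) ≤ ν t ∧ ν t ≤ (n:ℝ) := by
    intro n hn
    induction n, hn using Nat.le_induction with
    | base =>
      rw [hrn₀]
      refine ⟨le_rfl, ?_, ?_⟩
      · intro x hx y hy _
        rw [hν₀ x hx.1 hx.2, hν₀ y hy.1 hy.2]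
      · intro t ht
        rw [hν₀ t ht.1 ht.2]
        exact ⟨le_rfl, le_rfl⟩
    | succ n hn ih =>
      obtain ⟨hRr, hmono, hbd⟩ := ih
      have hΔ : r n < r (n + 1) := hstep n hn hRr hmono (fun t ht => (hbd t ht).1)
      have hΔ0 : (0:ℝ) < r (n + 1) - r n := by linarith
      have hform : ∀ t : ℝ, r n ≤ t → t ≤ r (n + 1) →
          ν t = (t - r n) / (r (n + 1) - r n) + n := hνlin n hn
      have hlin_bd : ∀ t : ℝ, r n ≤ t → t ≤ r (n + 1) → (n:ℝ) ≤ ν t ∧ ν t ≤ (n:ℝ) + 1 := by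
        intro t h1 h2
        rw [hform t h1 h2]
        constructor
        · have : (0:ℝ) ≤ (t - r n) / (r (n + 1) - r n) := div_nonneg (by linarith) hΔ0.le
          linarith
        · have : (t - r n) / (r (n + 1) - r n) ≤ 1 := (div_le_one hΔ0).2 (by linarith)
          linarith
      refine ⟨hRr.trans hΔ.le, ?_, ?_⟩
      · intro x hx y hy hxy
        by_cases hy' : y ≤ r n
        · exact hmono ⟨hx.1, hxy.trans hy'⟩ ⟨hy.1, hy'⟩ hxy
        · push_neg at hy'
          have hy2 := (hlin_bd y hy'.le hy.2).1
          by_cases hx' : x ≤ r n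
          · have hx2 := (hbd x ⟨hx.1, hx'⟩).2
            linarith
          · push_neg at hx'
            rw [hform x hx'.le hx.2, hform y hy'.le hy.2]
            have : (x - r n) / (r (n + 1) - r n) ≤ (y - r n) / (r (n + 1) - r n) := by
              apply div_le_div_of_nonneg_right (by linarith) hΔ0.le
            linarith
      · intro t ht
        by_cases ht' : t ≤ r n
        · obtain ⟨hb1, hb2⟩ := hbd t ⟨ht.1, ht'⟩
          exact ⟨hb1, by push_cast; linarith⟩
        · push_neg at ht'
          obtain ⟨hb1, hb2⟩ := hlin_bd t ht'.le ht.2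
          have hcast : (n₀:ℝ) ≤ (n:ℝ) := Nat.cast_le.2 hn
          exact ⟨hcast.trans hb1, by push_cast; linarith⟩
  -- main proof
  intro ε hε0 hε1 n hn hrε
  obtain ⟨hRr, hmono, hbd⟩ := key n hn
  obtain ⟨hRr1, hmono1, hbd1⟩ := key (n + 1) (le_trans hn (Nat.le_succ n))
  have hΔ : r n < r (n + 1) := hstep n hn hRr hmono (fun t ht => (hbd t ht).1)
  have hΔ0 : (0:ℝ) < r (n + 1) - r n := by linarith
  set b := r (n + 1) with hb
  set a := ε * b with ha
  have hb1 : (1:ℝ) < b := by linarith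
  have ha1 : (1:ℝ) < a := lt_of_lt_of_le (by linarith) hrε
  have hab : a ≤ b := by nlinarith
  have haub : a ≤ r (n + 1) := hab
  -- integrability
  have hIb : IntervalIntegrable (fun t => ν t / t) MeasureTheory.volume 1 b :=
    hint b hb1.le hmono1
  have hsub : ∀ c d : ℝ, 1 ≤ c → c ≤ d → d ≤ b → Set.uIcc c d ⊆ Set.uIcc 1 b := by
    intro c d h1 h2 h3
    rw [Set.uIcc_of_le h2, Set.uIcc_of_le hb1.le]
    exact Set.Icc_subset_Icc h1 h3
  have hIa : IntervalIntegrable (fun t => ν t / t) MeasureTheory.volume 1 a :=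
    hIb.mono_set (hsub 1 a le_rfl ha1.le hab)
  have hIab : IntervalIntegrable (fun t => ν t / t) MeasureTheory.volume a b :=
    hIb.mono_set (hsub a b ha1.le hab le_rfl)
  have hsplit : (∫ t in (1:ℝ)..a, ν t / t) + (∫ t in a..b, ν t / t) =
      ∫ t in (1:ℝ)..b, ν t / t := intervalIntegral.integral_add_adjacent_intervals hIa hIab
  -- lower bound for ∫_a^b ν/t
  have hlow : (∫ t in a..b, (n:ℝ) / t) ≤ ∫ t in a..b, ν t / t := by
    apply intervalIntegral.integral_mono_on hab (hintc a b n ha1.le hab) hIab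
    intro x hx
    have hx0 : (0:ℝ) < x := lt_of_lt_of_le (lt_of_lt_of_le one_pos ha1.le) hx.1
    have hxr : r n ≤ x := le_trans hrε hx.1
    have hνx : (n:ℝ) ≤ ν x := by
      rw [hνlin n hn x hxr hx.2]
      have : (0:ℝ) ≤ (x - r n) / (r (n + 1) - r n) := div_nonneg (by linarith) hΔ0.le
      linarith
    exact div_le_div_of_nonneg_right hνx hx0.le
  have hbne : b ≠ 0 := by linarith
  have hba : b / a = ε⁻¹ := by
    rw [ha]
    field_simp
  have hcalc : (∫ t in a..b, (n:ℝ) / t) = -((n:ℝ) * Real.log ε) := by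
    rw [hconst a b n ha1.le hab (Nat.cast_nonneg n), hba, Real.log_inv]
    ring
  have hεn : Real.exp ((n:ℝ) * Real.log ε) = ε ^ n := by
    rw [Real.exp_nat_mul, Real.exp_log hε0]
  constructor
  · rw [hL, hL]
    have : (∫ t in (1:ℝ)..a, ν t / t) ≤ (∫ t in (1:ℝ)..b, ν t / t) + (n:ℝ) * Real.log ε := by
      rw [← hsplit]
      have := hlow
      rw [hcalc] at this
      linarith
    calc Real.exp (∫ t in (1:ℝ)..a, ν t / t)
        ≤ Real.exp ((∫ t in (1:ℝ)..b, ν t / t) + (n:ℝ) * Real.log ε) := Real.exp_le_exp.2 this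
      _ = Real.exp ((n:ℝ) * Real.log ε) * Real.exp (∫ t in (1:ℝ)..b, ν t / t) := by
          rw [← Real.exp_add, add_comm]
      _ = ε ^ n * Real.exp (∫ t in (1:ℝ)..b, ν t / t) := by rw [hεn]
  · rw [hL, hrec (n + 1) (le_trans hn (Nat.le_succ n))]
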